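/- For every graph K, K is multiplicative if and only if Ω₃(K) is multiplicative. -/

import Mathlib

/-- A graph: a vertex set together with a symmetric adjacency relation (loops allowed). -/
structure LoopyGraph where
  V : Type
  Adj : V → V → Prop
  symm : ∀ ⦃u v⦄, Adj u v → Adj v u

/-- The categorial product of two graphs. -/
def LoopyGraph.tensor (G H : LoopyGraph) : LoopyGraph where
  V := G.V × H.V
  Adj p q := G.Adj p.1 q.1 ∧ H.Adj p.2 q.2
  symm := fun p q h => ⟨G.symm h.1, H.symm h.2⟩

/-- A graph `K` is multiplicative if whenever a product `G × H` admits a homomorphism to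
`K`, one of the factors `G` or `H` admits a homomorphism to `K`. -/
def GraphMultiplicative (K : LoopyGraph) : Prop :=
  ∀ G H : LoopyGraph, Nonempty ((G.tensor H).Adj →r K.Adj) →
    Nonempty (G.Adj →r K.Adj) ∨ Nonempty (H.Adj →r K.Adj)

/-- `Ω₃(H)`: vertices are the pairs `(u, U)` with `u ∈ V(H)` and `U` a subset of the
neighbourhood of `u` in `H`; `(u,U) ~ (v,V)` iff `u ∈ V`, `v ∈ U`, and every vertex of
`U` is adjacent to every vertex of `V`. -/
def Omega3 (H : LoopyGraph) : LoopyGraph where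
  V := {p : H.V × Set H.V // ∀ v ∈ p.2, H.Adj p.1 v}
  Adj p q := p.1.1 ∈ q.1.2 ∧ q.1.1 ∈ p.1.2 ∧ ∀ a ∈ p.1.2, ∀ b ∈ q.1.2, H.Adj a b
  symm := by
    rintro p q ⟨h1, h2, h3⟩
    exact ⟨h2, h1, fun a ha b hb => H.symm (h3 b hb a ha)⟩

/-- The "cube" of a graph: adjacency is existence of a walk of length 3. -/
def LoopyGraph.cube (G : LoopyGraph) : LoopyGraph where
  V := G.V
  Adj u v := ∃ a b, G.Adj u a ∧ G.Adj a b ∧ G.Adj b v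
  symm := by
    rintro u v ⟨a, b, h1, h2, h3⟩
    exact ⟨b, a, G.symm h3, G.symm h2, G.symm h1⟩

/-- Adjunction, one direction: a hom `G³ → K` yields a hom `G → Ω₃K`. -/
def cubeToOmega {G K : LoopyGraph} (f : G.cube.Adj →r K.Adj) : G.Adj →r (Omega3 K).Adj where
  toFun u := ⟨(f u, f '' {w | G.Adj u w}), by
    rintro v ⟨w, hw, rfl⟩
    exact f.map_rel ⟨w, u, hw, G.symm hw, hw⟩⟩
  map_rel' := by
    intro u v huv
    refine ⟨⟨u, G.symm huv, rfl⟩, ⟨v, huv, rfl⟩, ?_⟩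
    rintro a ⟨w, hw, rfl⟩ b ⟨z, hz, rfl⟩
    exact f.map_rel ⟨u, v, G.symm hw, huv, hz⟩

/-- Adjunction, other direction: a hom `G → Ω₃K` yields a hom `G³ → K`. -/
def omegaToCube {G K : LoopyGraph} (g : G.Adj →r (Omega3 K).Adj) : G.cube.Adj →r K.Adj where
  toFun u := (g u).1.1
  map_rel' := by
    rintro u v ⟨a, b, h1, h2, h3⟩
    exact (g.map_rel h2).2.2 _ (g.map_rel h1).1 _ (g.map_rel h3).2.1

/-- `Ω₃` is functorial. -/
def omegaMap {G K : LoopyGraph} (f : G.Adj →r K.Adj) : (Omega3 G).Adj →r (Omega3 K).Adj where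
  toFun p := ⟨(f p.1.1, f '' p.1.2), by
    rintro v ⟨w, hw, rfl⟩
    exact f.map_rel (p.2 w hw)⟩
  map_rel' := by
    rintro p q ⟨h1, h2, h3⟩
    refine ⟨⟨_, h1, rfl⟩, ⟨_, h2, rfl⟩, ?_⟩
    rintro a ⟨x, hx, rfl⟩ b ⟨y, hy, rfl⟩
    exact f.map_rel (h3 x hx y hy)

/-- `Ω₃` laxly preserves products. -/
def omegaProd {G H : LoopyGraph} :
    ((Omega3 G).tensor (Omega3 H)).Adj →r (Omega3 (G.tensor H)).Adj where
  toFun p := ⟨((p.1.1.1, p.2.1.1), p.1.1.2 ×ˢ p.2.1.2), by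
    rintro ⟨a, b⟩ ⟨ha, hb⟩
    exact ⟨p.1.2 a ha, p.2.2 b hb⟩⟩
  map_rel' := by
    rintro p q ⟨⟨h1, h2, h3⟩, ⟨k1, k2, k3⟩⟩
    exact ⟨⟨h1, k1⟩, ⟨h2, k2⟩, fun a ha b hb => ⟨h3 _ ha.1 _ hb.1, k3 _ ha.2 _ hb.2⟩⟩

/-- The cube of a product receives the product of the cubes (identity on vertices). -/
def cubeTensor {G H : LoopyGraph} :
    ((G.cube).tensor (H.cube)).Adj →r ((G.tensor H).cube).Adj where
  toFun p := p
  map_rel' := by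
    rintro p q ⟨⟨a, b, h1, h2, h3⟩, ⟨c, d, k1, k2, k3⟩⟩
    exact ⟨(a, c), (b, d), ⟨h1, k1⟩, ⟨h2, k2⟩, ⟨h3, k3⟩⟩

/-- There is a homomorphism `G → (Ω₃G)³`. -/
def unitCube {G : LoopyGraph} : G.Adj →r ((Omega3 G).cube).Adj where
  toFun u := ⟨(u, {w | G.Adj u w}), fun _ hv => hv⟩
  map_rel' := by
    intro u v huv
    refine ⟨⟨(v, {u}), fun w hw => ?_⟩, ⟨(u, {v}), fun w hw => ?_⟩, ?_, ?_, ?_⟩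
    · rw [Set.mem_singleton_iff.mp hw]; exact G.symm huv
    · rw [Set.mem_singleton_iff.mp hw]; exact huv
    · exact ⟨rfl, huv, fun a ha b hb => by
        rw [Set.mem_singleton_iff.mp hb]; exact G.symm ha⟩
    · exact ⟨rfl, rfl, fun a ha b hb => by
        rw [Set.mem_singleton_iff.mp ha, Set.mem_singleton_iff.mp hb]; exact huv⟩
    · exact ⟨G.symm huv, rfl, fun a ha b hb => by
        rw [Set.mem_singleton_iff.mp ha]; exact hb⟩

/-- For every graph `K`, `K` is multiplicative iff `Ω₃(K)` is multiplicative. -/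
theorem multiplicative_iff_omega3_multiplicative (K : LoopyGraph) :
    GraphMultiplicative K ↔ GraphMultiplicative (Omega3 K) := by
  constructor
  · rintro hK G H ⟨f⟩
    have h := hK G.cube H.cube ⟨(omegaToCube f).comp cubeTensor⟩
    exact h.imp (Nonempty.map cubeToOmega) (Nonempty.map cubeToOmega)
  · rintro hΩ G H ⟨f⟩
    have h := hΩ (Omega3 G) (Omega3 H) ⟨(omegaMap f).comp omegaProd⟩
    exact h.imp (Nonempty.map fun g => (omegaToCube g).comp unitCube)
      (Nonempty.map fun g => (omegaToCube g).comp unitCube)
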